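/- Let E be a real Hilbert space, L a closed linear subspace of E, and C a nonempty closed convex cone in E with L ⊆ C, and let r > 0. Then {x ∈ E : ‖x − P_L(x)‖² − ‖x − P_C(x)‖² < r²} = (C ∩ L⊥)° ⊕ Ball(0, r), where (C ∩ L⊥)° = {u ∈ E : ⟨u, v⟩ ≤ 0 for all v ∈ C ∩ L⊥} is the polar cone of C ∩ L⊥. (This identifies the acceptance region of the distance test for Type A problems.) -/

import Mathlib

open Pointwise

/-- Let E be a real Hilbert space, L a closed linear subspace, C a nonempty
closed convex cone with L ⊆ C, and r > 0. Then
{x : ‖x − P_L(x)‖² − ‖x − P_C(x)‖² < r²} = (C ∩ L⊥)° ⊕ Ball(0, r), where (C ∩ L⊥)° is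
the polar cone of C ∩ L⊥. -/
theorem stmt5 {E : Type*} [NormedAddCommGroup E] [InnerProductSpace ℝ E] [CompleteSpace E]
    (L : Submodule ℝ E) (hLclosed : IsClosed (L : Set E))
    (C : Set E) (hCne : C.Nonempty) (hCclosed : IsClosed C) (hCconv : Convex ℝ C)
    (hCcone : ∀ c ∈ C, ∀ r : ℝ, 0 ≤ r → r • c ∈ C)
    (hLC : (L : Set E) ⊆ C)
    (PL PC : E → E)
    (hPL : ∀ x : E, PL x ∈ L ∧ ∀ y ∈ (L : Set E), ‖x - PL x‖ ≤ ‖x - y‖)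
    (hPC : ∀ x : E, PC x ∈ C ∧ ∀ y ∈ C, ‖x - PC x‖ ≤ ‖x - y‖)
    (r : ℝ) (hr : 0 < r) :
    {x : E | ‖x - PL x‖ ^ 2 - ‖x - PC x‖ ^ 2 < r ^ 2} =
      {u : E | ∀ v ∈ C ∩ (Lᗮ : Set E), (inner ℝ u v : ℝ) ≤ 0} + Metric.ball (0 : E) r := by
  obtain ⟨c0, hc0⟩ := hCne
  have h0C : (0 : E) ∈ C := by simpa using hCcone c0 hc0 0 le_rfl
  ext x
  obtain ⟨hpL, hpmin⟩ := hPL x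
  obtain ⟨hqC, hqmin⟩ := hPC x
  set p := PL x with hp
  set q := PC x with hq
  -- minimality as iInf equalities
  haveI : Nonempty (L : Set E) := ⟨⟨p, hpL⟩⟩
  haveI : Nonempty C := ⟨⟨q, hqC⟩⟩
  have hp_iInf : ‖x - p‖ = ⨅ w : (L : Set E), ‖x - w‖ := by
    refine le_antisymm (le_ciInf fun w => hpmin w w.2) ?_
    exact ciInf_le ⟨0, Set.forall_mem_range.2 fun w => norm_nonneg _⟩ (⟨p, hpL⟩ : (L : Set E))
  have hq_iInf : ‖x - q‖ = ⨅ w : C, ‖x - w‖ := by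
    refine le_antisymm (le_ciInf fun w => hqmin w w.2) ?_
    exact ciInf_le ⟨0, Set.forall_mem_range.2 fun w => norm_nonneg _⟩ (⟨q, hqC⟩ : C)
  have hp_orth : ∀ l ∈ L, (inner ℝ (x - p) l : ℝ) = 0 :=
    (Submodule.norm_eq_iInf_iff_real_inner_eq_zero L hpL).mp hp_iInf
  have hq_char : ∀ w ∈ C, (inner ℝ (x - q) (w - q) : ℝ) ≤ 0 :=
    (norm_eq_iInf_iff_real_inner_le_zero hCconv hqC).mp hq_iInf
  -- ⟪x - q, q⟫ = 0
  have hq0 : (inner ℝ (x - q) q : ℝ) = 0 := by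
    have h1 := hq_char 0 h0C
    have h2 := hq_char ((2 : ℝ) • q) (hCcone q hqC 2 (by norm_num))
    rw [zero_sub, inner_neg_right] at h1
    have h2' : (inner ℝ (x - q) q : ℝ) ≤ 0 := by
      have : ((2 : ℝ) • q - q) = q := by
        rw [two_smul]; abel
      rwa [this] at h2
    linarith
  -- ⟪x - q, w⟫ ≤ 0 for all w ∈ C
  have hqC' : ∀ w ∈ C, (inner ℝ (x - q) w : ℝ) ≤ 0 := by
    intro w hw
    have := hq_char w hw
    rw [inner_sub_right] at this
    linarith
  -- ⟪x - q, l⟫ = 0 for l ∈ L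
  have hxqL : ∀ l ∈ L, (inner ℝ (x - q) l : ℝ) = 0 := by
    intro l hl
    have h1 := hqC' l (hLC hl)
    have h2 := hqC' (-l) (hLC (neg_mem hl))
    rw [inner_neg_right] at h2
    linarith
  -- q - p ∈ C
  have hqpC : q - p ∈ C := by
    have hhalf : ((1:ℝ)/2) • q + ((1:ℝ)/2) • (-p) ∈ C :=
      hCconv hqC (hLC (neg_mem hpL)) (by norm_num) (by norm_num) (by norm_num)
    have := hCcone _ hhalf 2 (by norm_num)
    have heq : (2:ℝ) • (((1:ℝ)/2) • q + ((1:ℝ)/2) • (-p)) = q - p := by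
      rw [smul_add, smul_smul, smul_smul]
      norm_num
      abel
    rwa [heq] at this
  -- ⟪q - p, l⟫ = 0 for l ∈ L
  have hqpL : ∀ l ∈ L, (inner ℝ (q - p) l : ℝ) = 0 := by
    intro l hl
    have : q - p = (x - p) - (x - q) := by abel
    rw [this, inner_sub_left, hp_orth l hl, hxqL l hl]
    ring
  -- q - p ∈ Lᗮ
  have hqpLperp : q - p ∈ Lᗮ := by
    rw [Submodule.mem_orthogonal]
    intro l hl
    rw [real_inner_comm]
    exact hqpL l hl
  -- ⟪x - q, q - p⟫ = 0
  have hortho : (inner ℝ (x - q) (q - p) : ℝ) = 0 := by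
    rw [inner_sub_right, hq0, hxqL p hpL]
    ring
  -- Pythagoras
  have hpyth : ‖x - p‖ ^ 2 = ‖x - q‖ ^ 2 + ‖q - p‖ ^ 2 := by
    have : x - p = (x - q) + (q - p) := by abel
    rw [this, norm_add_sq_real, hortho]
    ring
  have hiff : ‖x - p‖ ^ 2 - ‖x - q‖ ^ 2 < r ^ 2 ↔ ‖q - p‖ < r := by
    rw [hpyth]
    constructor
    · intro h
      nlinarith [norm_nonneg (q - p)]
    · intro h
      nlinarith [norm_nonneg (q - p)]
  simp only [Set.mem_setOf_eq, Set.mem_add, Metric.mem_ball, dist_zero_right]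
  rw [hiff]
  constructor
  · intro h
    refine ⟨x - q + p, ?_, q - p, ?_, by abel⟩
    · intro v ⟨hvC, hvL⟩
      have h1 : (inner ℝ (x - q) v : ℝ) ≤ 0 := hqC' v hvC
      have h2 : (inner ℝ p v : ℝ) = 0 :=
        (Submodule.mem_orthogonal L v).mp hvL p hpL
      rw [inner_add_left]
      linarith
    · exact h
  · rintro ⟨s, hs, b, hb, hsb⟩
    have hK : (inner ℝ s (q - p) : ℝ) ≤ 0 := hs (q - p) ⟨hqpC, hqpLperp⟩
    have hx1 : (inner ℝ (x - s) (q - p) : ℝ) ≥ ‖q - p‖ ^ 2 := by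
      have e1 : (inner ℝ x (q - p) : ℝ) = inner ℝ (x - q) (q - p) + inner ℝ q (q - p) := by
        rw [← inner_add_left]; congr 1; abel
      have e2 : (inner ℝ q (q - p) : ℝ) = inner ℝ (q - p) (q - p) + inner ℝ p (q - p) := by
        rw [← inner_add_left]; congr 1; abel
      have e3 : (inner ℝ p (q - p) : ℝ) = 0 := by
        rw [real_inner_comm]; exact hqpL p hpL
      have e4 : (inner ℝ (q - p) (q - p) : ℝ) = ‖q - p‖ ^ 2 := real_inner_self_eq_norm_sq _
      rw [inner_sub_left, e1, e2, e3, e4, hortho]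
      linarith
    have hcs : (inner ℝ (x - s) (q - p) : ℝ) ≤ ‖x - s‖ * ‖q - p‖ := real_inner_le_norm _ _
    have hxs : ‖x - s‖ = ‖b‖ := by rw [← hsb]; congr 1; abel
    rcases eq_or_lt_of_le (norm_nonneg (q - p)) with h0 | h0
    · rw [← h0]; exact hr
    · have : ‖q - p‖ ≤ ‖x - s‖ := by nlinarith
      rw [hxs] at this
      linarith
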